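/- Let q_1, ..., q_N be distinct complex numbers, none equal to 0 or 1, and W(z) = z(z-1)∏_{j=1}^N(z - z_j) with distinct z_j ∉ {0,1,q_1,...,q_N}, and Θ(z) = Θ_∞∏_{s=1}^N(z - q_s), Θ_∞ ≠ 0. Then for each r: ∑_{s ≠ r} W(q_s)/(q_s(q_s-1)Θ'(q_s)·(q_r - q_s)) = -1/Θ_∞ + [W(q_r)/(q_r(q_r-1)Θ'(q_r))]·[W'(q_r)/W(q_r) - Θ''(q_r)/(2Θ'(q_r)) - (2q_r - 1)/(q_r(q_r - 1))]. -/

import Mathlib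

open Polynomial Finset

lemma deriv_prod_xsc {ι : Type*} [DecidableEq ι] (s : Finset ι) (f : ι → ℂ) :
    derivative (∏ i ∈ s, (X - C (f i))) = ∑ i ∈ s, ∏ j ∈ s.erase i, (X - C (f j)) := by
  induction s using Finset.induction_on with
  | empty => simp
  | @insert a s ha ih =>
      rw [Finset.prod_insert ha, derivative_mul, derivative_sub, derivative_X, derivative_C,
        sub_zero, one_mul, ih, Finset.mul_sum, Finset.sum_insert ha, Finset.erase_insert ha]
      congr 1
      refine Finset.sum_congr rfl fun i hi => ?_
      rw [Finset.erase_insert_of_ne (by rintro rfl; exact ha hi),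
        Finset.prod_insert (fun h => ha (Finset.mem_of_mem_erase h))]

lemma eval_deriv_prod_xsc {ι : Type*} [DecidableEq ι] (s : Finset ι) (f : ι → ℂ) (x : ℂ) :
    eval x (derivative (∏ i ∈ s, (X - C (f i)))) =
      ∑ i ∈ s, ∏ j ∈ s.erase i, (x - f j) := by
  rw [deriv_prod_xsc, eval_finset_sum]
  exact Finset.sum_congr rfl fun i _ => by simp [eval_prod]

lemma alg_aux (Θi dr cr qr S T : ℂ) (hΘ : Θi ≠ 0) (hd : dr ≠ 0) (hc : cr ≠ 0)
    (h1 : qr ≠ 0) (h2 : qr - 1 ≠ 0) :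
    S / (Θi * dr) = -1 / Θi +
      qr * (qr - 1) * (cr * dr) / (qr * (qr - 1) * (Θi * dr)) *
        (((2 * qr - 1) * (cr * dr) + qr * (qr - 1) * (dr + S + cr * T)) /
            (qr * (qr - 1) * (cr * dr)) -
          Θi * (2 * T) / (2 * (Θi * dr)) - (2 * qr - 1) / (qr * (qr - 1))) := by
  have h12 : qr * (qr - 1) ≠ 0 := mul_ne_zero h1 h2
  have hΘd : Θi * dr ≠ 0 := mul_ne_zero hΘ hd
  have hcd : cr * dr ≠ 0 := mul_ne_zero hc hd
  have hB : qr * (qr - 1) * (cr * dr) / (qr * (qr - 1) * (Θi * dr)) = cr / Θi := by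
    rw [div_eq_div_iff (mul_ne_zero h12 hΘd) hΘ]; ring
  have hBig : ((2 * qr - 1) * (cr * dr) + qr * (qr - 1) * (dr + S + cr * T)) /
      (qr * (qr - 1) * (cr * dr)) =
      (2 * qr - 1) / (qr * (qr - 1)) + (dr + S + cr * T) / (cr * dr) := by
    rw [div_add_div _ _ h12 hcd,
      div_eq_div_iff (mul_ne_zero h12 hcd) (mul_ne_zero h12 hcd)]
  have hT2 : Θi * (2 * T) / (2 * (Θi * dr)) = T / dr := by
    rw [div_eq_div_iff (mul_ne_zero two_ne_zero hΘd) hd]; ring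
  rw [hB, hBig, hT2]
  have hcancel : (2 * qr - 1) / (qr * (qr - 1)) + (dr + S + cr * T) / (cr * dr) - T / dr -
      (2 * qr - 1) / (qr * (qr - 1)) = (dr + S + cr * T) / (cr * dr) - T / dr := by ring
  rw [hcancel]
  have hInner : (dr + S + cr * T) / (cr * dr) - T / dr = (dr + S) / (cr * dr) := by
    rw [div_sub_div _ _ hcd hd, div_eq_div_iff (mul_ne_zero hcd hd) hcd]; ring
  rw [hInner]
  have hMul : cr / Θi * ((dr + S) / (cr * dr)) = (dr + S) / (Θi * dr) := by
    rw [div_mul_div_comm, div_eq_div_iff (mul_ne_zero hΘ hcd) hΘd]; ring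
  rw [hMul]
  rw [div_add_div _ _ hΘ hΘd, div_eq_div_iff hΘd (mul_ne_zero hΘ hΘd)]
  ring

lemma term_aux (qs Θi ds qrqs Es cs : ℂ) (h0 : qs ≠ 0) (h1 : qs - 1 ≠ 0) (hΘ : Θi ≠ 0)
    (hd : ds ≠ 0) (hrs : qrqs ≠ 0) (hE : Es ≠ 0) :
    qs * (qs - 1) * (cs * ds) / (qs * (qs - 1) * (Θi * ds) * qrqs) =
      cs * Es / (Θi * (qrqs * Es)) := by
  rw [div_eq_div_iff
    (mul_ne_zero (mul_ne_zero (mul_ne_zero h0 h1) (mul_ne_zero hΘ hd)) hrs)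
    (mul_ne_zero hΘ (mul_ne_zero hrs hE))]
  ring

theorem stmt_11 (N : ℕ) (z q : Fin N → ℂ)
    (hz : Function.Injective z) (hq : Function.Injective q)
    (hz0 : ∀ j, z j ≠ 0) (hz1 : ∀ j, z j ≠ 1)
    (hq0 : ∀ r, q r ≠ 0) (hq1 : ∀ r, q r ≠ 1)
    (hqz : ∀ r j, q r ≠ z j)
    (Θinf : ℂ) (hΘinf : Θinf ≠ 0)
    (W Θ : Polynomial ℂ)
    (hW : W = X * (X - 1) * ∏ j, (X - C (z j)))
    (hΘ : Θ = C Θinf * ∏ s, (X - C (q s)))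
    (r : Fin N) :
    ∑ s ∈ Finset.univ.erase r,
        W.eval (q s) / (q s * (q s - 1) * (derivative Θ).eval (q s) * (q r - q s)) =
      -1 / Θinf +
        W.eval (q r) / (q r * (q r - 1) * (derivative Θ).eval (q r)) *
          ((derivative W).eval (q r) / W.eval (q r) -
            (derivative (derivative Θ)).eval (q r) / (2 * (derivative Θ).eval (q r)) -
            (2 * q r - 1) / (q r * (q r - 1))) := by
  classical
  set P : Polynomial ℂ := ∏ j, (X - C (z j)) with hPdef
  set a : Fin N → ℂ := fun s => ∏ j, (q s - z j) with hadef
  set d : Fin N → ℂ := fun s => ∏ t ∈ univ.erase s, (q s - q t) with hddef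
  set c : Fin N → ℂ := fun s => a s / d s with hcdef
  set E : Fin N → ℂ := fun s => ∏ t ∈ (univ.erase r).erase s, (q r - q t) with hEdef
  -- nonvanishing
  have hqq : ∀ s t : Fin N, s ≠ t → q s - q t ≠ 0 := fun s t h => sub_ne_zero.mpr (fun e => h (hq e))
  have ha0 : ∀ s, a s ≠ 0 := fun s => Finset.prod_ne_zero_iff.mpr fun j _ => sub_ne_zero.mpr (hqz s j)
  have hd0 : ∀ s, d s ≠ 0 := fun s => Finset.prod_ne_zero_iff.mpr fun t ht =>
    hqq s t (fun e => (Finset.mem_erase.mp ht).1 e.symm)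
  have hE0 : ∀ s, E s ≠ 0 := fun s => Finset.prod_ne_zero_iff.mpr fun t ht =>
    hqq r t (fun e => (Finset.mem_erase.mp (Finset.mem_of_mem_erase ht)).1 e.symm)
  -- eval of P
  have hPeval : ∀ x : ℂ, P.eval x = ∏ j, (x - z j) := fun x => by simp [hPdef, eval_prod]
  -- (1) Θ' at q s
  have hΘ' : ∀ s, (derivative Θ).eval (q s) = Θinf * d s := by
    intro s
    rw [hΘ, derivative_mul, derivative_C, zero_mul, zero_add, eval_mul, eval_C,
      eval_deriv_prod_xsc]
    congr 1
    rw [Finset.sum_eq_single s]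
    · exact fun t _ hts => Finset.prod_eq_zero (Finset.mem_erase.mpr ⟨fun e => hts e.symm, Finset.mem_univ s⟩) (by simp)
    · exact fun h => absurd (Finset.mem_univ s) h
  have hinnerne : ∀ s : Fin N, s ≠ r →
      eval (q r) (derivative (∏ t ∈ univ.erase s, (X - C (q t)))) = E s := by
    intro s hs
    rw [eval_deriv_prod_xsc, Finset.sum_eq_single r]
    · rw [Finset.erase_right_comm]
    · intro u hu hur
      refine Finset.prod_eq_zero (i := r) ?_ (by simp)
      exact Finset.mem_erase.mpr ⟨Ne.symm hur,
        Finset.mem_erase.mpr ⟨Ne.symm hs, Finset.mem_univ r⟩⟩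
    · intro h
      exact absurd (Finset.mem_erase.mpr ⟨Ne.symm hs, Finset.mem_univ r⟩) h
  have hinnerr :
      eval (q r) (derivative (∏ t ∈ univ.erase r, (X - C (q t)))) = ∑ u ∈ univ.erase r, E u := by
    rw [eval_deriv_prod_xsc]
  -- (2) Θ'' at q r
  have hΘ'' : (derivative (derivative Θ)).eval (q r) = Θinf * (2 * ∑ s ∈ univ.erase r, E s) := by
    rw [hΘ, derivative_mul, derivative_C, zero_mul, zero_add, derivative_mul, derivative_C,
      zero_mul, zero_add, eval_mul, eval_C, deriv_prod_xsc, derivative_sum, eval_finset_sum]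
    have h1 : ∀ s ∈ (univ : Finset (Fin N)),
        eval (q r) (derivative (∏ j ∈ univ.erase s, (X - C (q j)))) =
          if s = r then ∑ u ∈ univ.erase r, E u else E s := by
      intro s _
      by_cases hs : s = r
      · subst hs; simp [hinnerr]
      · simp [hs, hinnerne s hs]
    rw [Finset.sum_congr rfl h1, ← Finset.add_sum_erase _ _ (Finset.mem_univ r), if_pos rfl,
      Finset.sum_congr rfl (fun x hx => if_neg (Finset.mem_erase.mp hx).1)]
    ring
  -- (3) Lagrange identity
  have hQ : C Θinf⁻¹ * Θ = ∏ s, (X - C (q s)) := by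
    rw [hΘ, ← mul_assoc, ← C_mul, inv_mul_cancel₀ hΘinf, C_1, one_mul]
  have hkey : P = C Θinf⁻¹ * Θ + ∑ s, C (c s) * ∏ t ∈ univ.erase s, (X - C (q t)) := by
    set D : Polynomial ℂ :=
      P - (C Θinf⁻¹ * Θ + ∑ s, C (c s) * ∏ t ∈ univ.erase s, (X - C (q t))) with hD
    have hDeval : ∀ u, D.eval (q u) = 0 := by
      intro u
      rw [hD, eval_sub, eval_add, hQ, hPeval, eval_finset_sum]
      have h2 : eval (q u) (∏ s, (X - C (q s))) = 0 := by
        rw [eval_prod]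
        exact Finset.prod_eq_zero (Finset.mem_univ u) (by simp)
      have h3 : ∑ s, eval (q u) (C (c s) * ∏ t ∈ univ.erase s, (X - C (q t))) = a u := by
        rw [Finset.sum_eq_single u]
        · rw [eval_mul, eval_C, eval_prod]
          have : (∏ t ∈ univ.erase u, (q u - q t)) = d u := by
            simp [hddef]
          simp only [eval_sub, eval_X, eval_C, this]
          rw [hcdef]
          exact div_mul_cancel₀ (a u) (hd0 u)
        · intro t _ htu
          rw [eval_mul, eval_prod]
          refine mul_eq_zero_of_right _ (Finset.prod_eq_zero (i := u) ?_ (by simp))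
          exact Finset.mem_erase.mpr ⟨Ne.symm htu, Finset.mem_univ u⟩
        · exact fun h => absurd (Finset.mem_univ u) h
      rw [h2, h3]
      ring
    have hmonP : P.Monic := monic_prod_of_monic _ _ fun j _ => monic_X_sub_C (z j)
    have hmonQ : (∏ s, (X - C (q s)) : Polynomial ℂ).Monic :=
      monic_prod_of_monic _ _ fun s _ => monic_X_sub_C (q s)
    have hNpos : 0 < N := Nat.pos_of_ne_zero (by rintro rfl; exact r.elim0)
    have hndP : P.natDegree = N := by
      rw [hPdef, natDegree_prod _ _ (fun j _ => X_sub_C_ne_zero (z j))]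
      simp
    have hndQ : (∏ s, (X - C (q s)) : Polynomial ℂ).natDegree = N := by
      rw [natDegree_prod _ _ (fun s _ => X_sub_C_ne_zero (q s))]
      simp
    have hdegPQ : P.degree = (∏ s, (X - C (q s)) : Polynomial ℂ).degree := by
      rw [degree_eq_natDegree hmonP.ne_zero, degree_eq_natDegree hmonQ.ne_zero, hndP, hndQ]
    have hsub : (P - ∏ s, (X - C (q s))).degree < (N : WithBot ℕ) := by
      have h := degree_sub_lt hdegPQ hmonP.ne_zero
        (by rw [hmonP.leadingCoeff, hmonQ.leadingCoeff])
      rwa [degree_eq_natDegree hmonP.ne_zero, hndP] at h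
    have hsumdeg : (∑ s, C (c s) * ∏ t ∈ univ.erase s, (X - C (q t)) : Polynomial ℂ).degree <
        (N : WithBot ℕ) := by
      refine lt_of_le_of_lt (degree_sum_le _ _) ?_
      refine (Finset.sup_lt_iff (WithBot.bot_lt_coe N)).mpr fun s _ => ?_
      refine lt_of_le_of_lt (degree_mul_le _ _) ?_
      have hdeg2 : (∏ t ∈ univ.erase s, (X - C (q t)) : Polynomial ℂ).degree =
          ((N - 1 : ℕ) : WithBot ℕ) := by
        rw [degree_prod]
        simp [degree_X_sub_C, Finset.card_erase_of_mem]
      rw [hdeg2]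
      calc degree (C (c s)) + ((N - 1 : ℕ) : WithBot ℕ)
          ≤ 0 + ((N - 1 : ℕ) : WithBot ℕ) := add_le_add_left degree_C_le _
        _ = ((N - 1 : ℕ) : WithBot ℕ) := zero_add _
        _ < (N : WithBot ℕ) := by exact_mod_cast Nat.sub_lt hNpos one_pos
    have hD0 : D = 0 := by
      by_cases h : D = 0
      · exact h
      · refine Polynomial.eq_zero_of_natDegree_lt_card_of_eval_eq_zero D hq hDeval ?_
        rw [Fintype.card_fin]
        have hsplit : D = (P - ∏ s, (X - C (q s))) -
            ∑ s, C (c s) * ∏ t ∈ univ.erase s, (X - C (q t)) := by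
          rw [hD, hQ]; ring
        have hdegD : D.degree < (N : WithBot ℕ) := by
          rw [hsplit]
          exact lt_of_le_of_lt (degree_sub_le _ _) (max_lt hsub hsumdeg)
        exact (natDegree_lt_iff_degree_lt h).mpr hdegD
    exact (sub_eq_zero.mp hD0)
  -- derivative of P at q r
  have hP' : (derivative P).eval (q r) =
      d r + ∑ s ∈ univ.erase r, c s * E s + c r * ∑ s ∈ univ.erase r, E s := by
    have h := congrArg (fun p => eval (q r) (derivative p)) hkey
    simp only [derivative_add, derivative_mul, derivative_C, zero_mul, zero_add, eval_add,
      eval_mul, eval_C, derivative_sum, eval_finset_sum] at h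
    have hsum : ∑ x : Fin N, c x * eval (q r) (derivative (∏ t ∈ univ.erase x, (X - C (q t)))) =
        c r * (∑ u ∈ univ.erase r, E u) + ∑ s ∈ univ.erase r, c s * E s := by
      rw [← Finset.add_sum_erase _ _ (Finset.mem_univ r), hinnerr]
      congr 1
      exact Finset.sum_congr rfl fun s hs => by rw [hinnerne s (Finset.mem_erase.mp hs).1]
    rw [h, hΘ' r, hsum, inv_mul_cancel_left₀ hΘinf]
    ring
  -- (4),(5) W evals
  have hWeval : ∀ s, W.eval (q s) = q s * (q s - 1) * a s := by
    intro s
    rw [hW, eval_mul, eval_mul, eval_X, eval_sub, eval_X, eval_one, hPeval]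
  have hW' : (derivative W).eval (q r) =
      (2 * q r - 1) * a r + q r * (q r - 1) * (derivative P).eval (q r) := by
    rw [hW, derivative_mul, derivative_mul, derivative_X, derivative_sub, derivative_X,
      derivative_one, sub_zero]
    simp only [← hPdef, eval_add, eval_mul, eval_sub, eval_X, eval_one, one_mul, mul_one]
    rw [hPeval]
    simp only [hadef]
    ring
  -- final assembly
  have hterm : ∀ s ∈ univ.erase r,
      W.eval (q s) / (q s * (q s - 1) * (derivative Θ).eval (q s) * (q r - q s)) =
        c s * E s / (Θinf * d r) := by
    intro s hs
    have hsr : s ≠ r := (Finset.mem_erase.mp hs).1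
    have hdr : d r = (q r - q s) * E s := (Finset.mul_prod_erase _ _ hs).symm
    have hacs : a s = c s * d s := (div_mul_cancel₀ (a s) (hd0 s)).symm
    rw [hWeval s, hΘ' s, hdr, hacs]
    exact term_aux (q s) Θinf (d s) (q r - q s) (E s) (c s) (hq0 s)
      (sub_ne_zero.mpr (hq1 s)) hΘinf (hd0 s) (hqq r s (Ne.symm hsr)) (hE0 s)
  rw [Finset.sum_congr rfl hterm, ← Finset.sum_div, hWeval r, hΘ' r, hW', hΘ'', hP']
  have hacr : a r = c r * d r := (div_mul_cancel₀ (a r) (hd0 r)).symm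
  rw [hacr]
  exact alg_aux Θinf (d r) (c r) (q r) (∑ s ∈ univ.erase r, c s * E s)
    (∑ s ∈ univ.erase r, E s) hΘinf (hd0 r) (div_ne_zero (ha0 r) (hd0 r))
    (hq0 r) (sub_ne_zero.mpr (hq1 r))
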